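/- (Kantorovich-type step bound) Let A be SPD with eigenvalues in [λₙ, λ₁], κ = λ₁/λₙ, g ≠ 0, θ = (gᵀg)/(gᵀAg) the minimal-gradient step, and ω ∈ (0,2). Then ‖g − ωθAg‖²_{A⁻¹} ≤ (1 − ω(2−ω)·4κ/(κ+1)²)·‖g‖²_{A⁻¹}. -/

import Mathlib

open Matrix

lemma quad_form {n : ℕ} (U : Matrix (Fin n) (Fin n) ℝ) (d : Fin n → ℝ) (v : Fin n → ℝ) :
    v ⬝ᵥ ((U * Matrix.diagonal d * star U) *ᵥ v) = ∑ i, d i * ((star U *ᵥ v) i)^2 := by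
  have h1 : (U * Matrix.diagonal d * star U) *ᵥ v
      = U *ᵥ (Matrix.diagonal d *ᵥ (star U *ᵥ v)) := by
    rw [mulVec_mulVec, mulVec_mulVec]
  rw [h1, dotProduct_mulVec, ← mulVec_transpose,
    Matrix.star_eq_conjTranspose, conjTranspose_eq_transpose_of_trivial]
  simp [dotProduct, mulVec_diagonal]
  exact Finset.sum_congr rfl fun i _ => by ring

lemma kanto {n : ℕ} (A : Matrix (Fin n) (Fin n) ℝ) (hA : A.PosDef)
    (m M : ℝ) (hm : 0 < m)
    (hspec : ∀ v : Fin n → ℝ, m * (v ⬝ᵥ v) ≤ v ⬝ᵥ (A *ᵥ v) ∧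
      v ⬝ᵥ (A *ᵥ v) ≤ M * (v ⬝ᵥ v)) (v : Fin n → ℝ) :
    v ⬝ᵥ (A *ᵥ v) + m * M * (v ⬝ᵥ (A⁻¹ *ᵥ v)) ≤ (m + M) * (v ⬝ᵥ v) := by
  have hH : A.IsHermitian := hA.1
  set U : Matrix (Fin n) (Fin n) ℝ := (hH.eigenvectorUnitary : Matrix (Fin n) (Fin n) ℝ) with hU
  set μ : Fin n → ℝ := hH.eigenvalues with hμ
  have hμpos : ∀ i, 0 < μ i := fun i => hA.eigenvalues_pos i
  have hAeq : A = U * Matrix.diagonal μ * star U := by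
    have := hH.spectral_theorem
    simpa using this
  have hbound : ∀ i, m ≤ μ i ∧ μ i ≤ M := by
    intro i
    have hv := hH.mulVec_eigenvectorBasis i
    set w : Fin n → ℝ := ⇑(hH.eigenvectorBasis i) with hw
    have hwne : w ≠ 0 := by
      intro h
      exact (hH.eigenvectorBasis.toBasis.ne_zero i) (by simpa [hw] using h)
    have hwpos : 0 < w ⬝ᵥ w := by
      rcases lt_or_eq_of_le (Finset.sum_nonneg fun j _ => mul_self_nonneg (w j)) with h | h
      · exact h
      · exact absurd (dotProduct_self_eq_zero.mp h.symm) hwne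
    have hq : w ⬝ᵥ (A *ᵥ w) = μ i * (w ⬝ᵥ w) := by
      rw [hv]; simp [dotProduct_smul, smul_eq_mul, hμ]
    constructor
    · have := (hspec w).1
      rw [hq] at this
      exact le_of_mul_le_mul_right (by linarith) hwpos
    · have := (hspec w).2
      rw [hq] at this
      exact le_of_mul_le_mul_right (by linarith) hwpos
  have hUU : U * star U = 1 := by
    exact Matrix.mem_unitaryGroup_iff.mp hH.eigenvectorUnitary.2
  have hUU' : star U * U = 1 := by
    exact Matrix.mem_unitaryGroup_iff'.mp hH.eigenvectorUnitary.2
  have hAinv : A⁻¹ = U * Matrix.diagonal (fun i => (μ i)⁻¹) * star U := by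
    apply inv_eq_right_inv
    rw [hAeq]
    calc U * Matrix.diagonal μ * star U * (U * Matrix.diagonal (fun i => (μ i)⁻¹) * star U)
        = U * Matrix.diagonal μ * (star U * U) * Matrix.diagonal (fun i => (μ i)⁻¹) * star U := by
          noncomm_ring
      _ = U * (Matrix.diagonal μ * Matrix.diagonal (fun i => (μ i)⁻¹)) * star U := by
          rw [hUU']; noncomm_ring
      _ = 1 := by
          rw [Matrix.diagonal_mul_diagonal]
          have : (fun i => μ i * (μ i)⁻¹) = fun _ => (1:ℝ) := by
            funext i; exact mul_inv_cancel₀ (hμpos i).ne'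
          rw [this, Matrix.diagonal_one, Matrix.mul_one, hUU]
  have hone : (1 : Matrix (Fin n) (Fin n) ℝ) = U * Matrix.diagonal (fun _ => (1:ℝ)) * star U := by
    rw [Matrix.diagonal_one, Matrix.mul_one, hUU]
  set y : Fin n → ℝ := star U *ᵥ v with hy
  have e1 : v ⬝ᵥ (A *ᵥ v) = ∑ i, μ i * (y i)^2 := by rw [hAeq]; exact quad_form U μ v
  have e2 : v ⬝ᵥ (A⁻¹ *ᵥ v) = ∑ i, (μ i)⁻¹ * (y i)^2 := by
    rw [hAinv]; exact quad_form U _ v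
  have e3 : v ⬝ᵥ v = ∑ i, 1 * (y i)^2 := by
    have h := quad_form U (fun _ => (1:ℝ)) v
    rw [← hone] at h
    simp only [one_mulVec] at h
    exact h
  have hterm : ∀ i, μ i * (y i)^2 + m*M*((μ i)⁻¹*(y i)^2) ≤ (m+M)*(1*(y i)^2) := by
    intro i
    have h1 := (hbound i).1
    have h2 := (hbound i).2
    have hp := hμpos i
    have hinv : μ i * (μ i)⁻¹ = 1 := mul_inv_cancel₀ hp.ne'
    have hkey : μ i + m*M*(μ i)⁻¹ ≤ m + M := by
      nlinarith [mul_nonneg (sub_nonneg.2 h1) (sub_nonneg.2 h2), inv_pos.2 hp]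
    nlinarith [sq_nonneg (y i)]
  rw [e1, e2, e3, Finset.mul_sum, Finset.mul_sum, ← Finset.sum_add_distrib]
  exact Finset.sum_le_sum fun i _ => hterm i

theorem stmt7 (n : ℕ) (A : Matrix (Fin n) (Fin n) ℝ) (hA : A.PosDef)
    (lam1 lamn : ℝ) (hlamn : 0 < lamn) (hle : lamn ≤ lam1)
    (hspec : ∀ v : Fin n → ℝ, lamn * (v ⬝ᵥ v) ≤ v ⬝ᵥ (A *ᵥ v) ∧
      v ⬝ᵥ (A *ᵥ v) ≤ lam1 * (v ⬝ᵥ v))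
    (κ : ℝ) (hκ : κ = lam1 / lamn)
    (g : Fin n → ℝ) (hg : g ≠ 0)
    (θ : ℝ) (hθ : θ = (g ⬝ᵥ g) / (g ⬝ᵥ (A *ᵥ g)))
    (ω : ℝ) (hω0 : 0 < ω) (hω2 : ω < 2) :
    (g - (ω * θ) • (A *ᵥ g)) ⬝ᵥ (A⁻¹ *ᵥ (g - (ω * θ) • (A *ᵥ g))) ≤
      (1 - ω * (2 - ω) * (4 * κ) / (κ + 1) ^ 2) * (g ⬝ᵥ (A⁻¹ *ᵥ g)) := by
  set m := lamn
  set M := lam1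
  set a : ℝ := g ⬝ᵥ (A *ᵥ g) with hadef
  set b : ℝ := g ⬝ᵥ g with hbdef
  set c : ℝ := g ⬝ᵥ (A⁻¹ *ᵥ g) with hcdef
  have hM : 0 < M := lt_of_lt_of_le hlamn hle
  have hbpos : 0 < b := by
    rcases lt_or_eq_of_le (Finset.sum_nonneg fun j _ => mul_self_nonneg (g j)) with h | h
    · exact h
    · exact absurd (dotProduct_self_eq_zero.mp h.symm) hg
  have hapos : 0 < a := by
    have := hA.re_dotProduct_pos hg
    simpa [hadef, dotProduct] using this
  -- inverse facts
  have hdet : IsUnit A.det := (hA.det_pos.ne').isUnit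
  have hAiA : A⁻¹ *ᵥ (A *ᵥ g) = g := by
    rw [mulVec_mulVec, Matrix.nonsing_inv_mul A hdet, one_mulVec]
  have hAAi : A *ᵥ (A⁻¹ *ᵥ g) = g := by
    rw [mulVec_mulVec, Matrix.mul_nonsing_inv A hdet, one_mulVec]
  have hsymA : Aᵀ = A := by
    rw [← conjTranspose_eq_transpose_of_trivial]; exact hA.1
  have hdotA : ∀ x z : Fin n → ℝ, (A *ᵥ x) ⬝ᵥ z = x ⬝ᵥ (A *ᵥ z) := by
    intro x z
    rw [dotProduct_mulVec x A z, ← mulVec_transpose, hsymA, dotProduct_comm]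
  -- expand LHS
  have hAgAig : (A *ᵥ g) ⬝ᵥ (A⁻¹ *ᵥ g) = b := by
    rw [hdotA, hAAi]
  have hAgg : (A *ᵥ g) ⬝ᵥ g = a := by
    rw [dotProduct_comm]
  have hL : (g - (ω * θ) • (A *ᵥ g)) ⬝ᵥ (A⁻¹ *ᵥ (g - (ω * θ) • (A *ᵥ g)))
      = c - 2*(ω*θ)*b + (ω*θ)^2*a := by
    rw [mulVec_sub, mulVec_smul, hAiA]
    rw [sub_dotProduct, dotProduct_sub, dotProduct_sub, smul_dotProduct, smul_dotProduct,
      dotProduct_smul, dotProduct_smul]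
    simp only [smul_eq_mul, hAgAig, hAgg]
    rw [← hbdef, ← hcdef]
    ring
  rw [hL]
  -- key inequality
  have hkey := kanto A hA m M hlamn hspec g
  rw [← hadef, ← hbdef, ← hcdef] at hkey
  have h4 : 4*M*m*(a*c) ≤ (M+m)^2*b^2 := by
    have hcpos : 0 < c := by
      have := hA.inv.re_dotProduct_pos hg
      simpa [hcdef, dotProduct] using this
    have hsum : 0 ≤ a + m*M*c :=
      add_nonneg hapos.le (mul_nonneg (mul_nonneg hlamn.le hM.le) hcpos.le)
    have hsq : (a + m*M*c)^2 ≤ ((m+M)*b)^2 := by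
      apply pow_le_pow_left₀ hsum hkey
    nlinarith [sq_nonneg (a - m*M*c), hsq]
  have hMm : (0:ℝ) < M + m := by linarith
  have hfrac : ω * (2 - ω) * (4 * κ) / (κ + 1) ^ 2 = ω*(2-ω)*(4*M*m)/(M+m)^2 := by
    rw [hκ]
    field_simp
  rw [hfrac]
  have hθ' : θ = b / a := hθ
  rw [hθ']
  have hLeq : c - 2*(ω*(b/a))*b + (ω*(b/a))^2*a = c - ω*(2-ω)*(b^2/a) := by
    field_simp
    ring
  rw [hLeq]
  have hstep : (4*M*m)/(M+m)^2*c ≤ b^2/a := by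
    rw [div_mul_eq_mul_div, div_le_div_iff₀ (by positivity) hapos]
    nlinarith [h4]
  have h0 : (0:ℝ) ≤ ω*(2-ω) := by nlinarith
  have key2 : ω*(2-ω)*(4*M*m)/(M+m)^2*c ≤ ω*(2-ω)*(b^2/a) := by
    have h5 := mul_le_mul_of_nonneg_left hstep h0
    calc ω*(2-ω)*(4*M*m)/(M+m)^2*c = ω*(2-ω)*((4*M*m)/(M+m)^2*c) := by ring
      _ ≤ ω*(2-ω)*(b^2/a) := h5
  have hrhs : (1 - ω*(2-ω)*(4*M*m)/(M+m)^2)*c = c - ω*(2-ω)*(4*M*m)/(M+m)^2*c := by ring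
  rw [hrhs]
  linarith
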